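/- arXiv:1508.06450 — 7 statements merged into one kernel-verified Lean document; each statement's English description precedes it below -/
import Mathlib

section
/- Let f satisfy (H). Then limsup_{t→∞} f'(t)F(t)/f(t)² ≥ 1/2. (Equivalently: it is impossible that limsup_{t→∞} f'(t)F(t)/f(t)² < 1/2.) -/
open Filter Set MeasureTheory intervalIntegral Topology

/-- If `f` satisfies (H) (C¹, nondecreasing, `f 0 > 0`, superlinear), then
`limsup_{t→∞} f'(t)F(t)/f(t)² ≥ 1/2`, where `F(t) = ∫₀^t f(s) ds`.
The limsup is taken in `EReal` so that it is well-defined even if the quotient is unbounded. -/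
theorem stmt_0 (f f' F : ℝ → ℝ)
    (hf' : ∀ t ∈ Set.Ici (0:ℝ), HasDerivAt f (f' t) t)
    (hf'cont : ContinuousOn f' (Set.Ici 0))
    (hmono : MonotoneOn f (Set.Ici 0))
    (hf0 : 0 < f 0)
    (hsuper : Tendsto (fun t => f t / t) atTop atTop)
    (hF : ∀ t, F t = ∫ s in (0:ℝ)..t, f s) :
    ((1/2 : ℝ) : EReal) ≤
      Filter.limsup (fun t => ((f' t * F t / (f t) ^ 2 : ℝ) : EReal)) atTop := by
  by_contra hcon
  push_neg at hcon
  have hev : ∀ᶠ t in atTop, ((f' t * F t / (f t) ^ 2 : ℝ) : EReal) < ((1/2 : ℝ) : EReal) :=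
    Filter.eventually_lt_of_limsup_lt hcon
  have hev' : ∀ᶠ t in atTop, f' t * F t / (f t) ^ 2 < 1/2 := by
    filter_upwards [hev] with t ht
    exact_mod_cast ht
  obtain ⟨a0, ha0⟩ := eventually_atTop.mp hev'
  set a : ℝ := max a0 1 with ha_def
  have ha1 : (1:ℝ) ≤ a := le_max_right _ _
  have ha0' : (0:ℝ) < a := lt_of_lt_of_le one_pos ha1
  have hquot : ∀ t ≥ a, f' t * F t / (f t) ^ 2 < 1/2 := fun t ht =>
    ha0 t (le_trans (le_max_left _ _) ht)
  -- basic facts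
  have fcont : ∀ t ∈ Set.Ici (0:ℝ), ContinuousAt f t := fun t ht => (hf' t ht).continuousAt
  have fpos : ∀ t ∈ Set.Ici (0:ℝ), 0 < f t := fun t ht =>
    hf0.trans_le (hmono (self_mem_Ici) ht ht)
  have fcontOn : ContinuousOn f (Set.Ici 0) := fun t ht => (fcont t ht).continuousWithinAt
  -- F has derivative f on (0, ∞)
  have hFd : ∀ t ∈ Set.Ioi (0:ℝ), HasDerivAt F (f t) t := by
    intro t ht
    have htpos : (0:ℝ) < t := ht
    have hint : IntervalIntegrable f volume 0 t := by
      apply ContinuousOn.intervalIntegrable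
      intro s hs
      rw [Set.uIcc_of_le htpos.le] at hs
      exact (fcont s hs.1).continuousWithinAt
    have hmeas : StronglyMeasurableAtFilter f (𝓝 t) volume :=
      ⟨Set.Ioi 0, Ioi_mem_nhds htpos,
        (fcontOn.mono Set.Ioi_subset_Ici_self).aestronglyMeasurable measurableSet_Ioi⟩
    have h1 : HasDerivAt (fun u => ∫ x in (0:ℝ)..u, f x) (f t) t :=
      intervalIntegral.integral_hasDerivAt_right hint hmeas (fcont t htpos.le)
    exact h1.congr_of_eventuallyEq (Filter.Eventually.of_forall fun u => hF u)
  -- F is positive on (0, ∞)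
  have Fpos : ∀ t ∈ Set.Ioi (0:ℝ), 0 < F t := by
    intro t ht
    have htpos : (0:ℝ) < t := ht
    rw [hF t]
    apply intervalIntegral.intervalIntegral_pos_of_pos_on
    · apply ContinuousOn.intervalIntegrable
      intro s hs
      rw [Set.uIcc_of_le htpos.le] at hs
      exact (fcont s hs.1).continuousWithinAt
    · intro s hs
      exact fpos s hs.1.le
    · exact htpos
  -- G = F / f has derivative 1 - quot ≥ 1/2 on (a, ∞)
  set G : ℝ → ℝ := fun t => F t / f t with hG_def
  have hGd : ∀ t ∈ Set.Ioi (0:ℝ), HasDerivAt G (1 - f' t * F t / (f t) ^ 2) t := by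
    intro t ht
    have h := (hFd t ht).div (hf' t (show (0:ℝ) ≤ t from le_of_lt ht)) (fpos t (show (0:ℝ) ≤ t from le_of_lt ht)).ne'
    refine h.congr_deriv (Eq.symm ?_)
    have hft : f t ≠ 0 := (fpos t (show (0:ℝ) ≤ t from le_of_lt ht)).ne'
    field_simp
  have hGcont : ContinuousOn G (Set.Ici a) := by
    intro t ht
    exact ((hGd t (lt_of_lt_of_le ha0' ht)).continuousAt).continuousWithinAt
  have hGdiff : DifferentiableOn ℝ G (interior (Set.Ici a)) := by
    rw [interior_Ici]
    intro t ht
    exact ((hGd t (lt_trans ha0' ht)).differentiableAt).differentiableWithinAt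
  have hGderiv_ge : ∀ t ∈ interior (Set.Ici a), (1/2:ℝ) ≤ deriv G t := by
    rw [interior_Ici]
    intro t ht
    have h := (hGd t (lt_trans ha0' ht)).deriv
    rw [h]
    have := hquot t (le_of_lt ht)
    linarith
  have hGgrow : ∀ t ≥ a, (1/2:ℝ) * (t - a) ≤ G t - G a :=
    fun t ht => (convex_Ici a).mul_sub_le_image_sub_of_le_deriv hGcont hGdiff hGderiv_ge
      a self_mem_Ici t ht ht
  have hGa_pos : 0 < G a := div_pos (Fpos a ha0') (fpos a ha0'.le)
  -- hence f t * (t - a) ≤ 2 * F t for t ≥ a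
  have hkey : ∀ t ≥ a, f t * (t - a) ≤ 2 * F t := by
    intro t ht
    have h1 : (1/2:ℝ) * (t - a) ≤ G t := by have := hGgrow t ht; linarith
    have hft : 0 < f t := fpos t (le_trans ha0'.le ht)
    rw [hG_def] at h1
    have h2 : (1/2:ℝ) * (t - a) * f t ≤ F t := by
      calc (1/2:ℝ) * (t - a) * f t ≤ F t / f t * f t := by
            apply mul_le_mul_of_nonneg_right h1 hft.le
        _ = F t := by field_simp
    nlinarith
  -- log comparison on [a+1, ∞)
  set b : ℝ := a + 1 with hb_def
  have hb_gt : a < b := by simp [hb_def]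
  set φ : ℝ → ℝ := fun t => Real.log (F t) - 2 * Real.log (t - a) with hφ_def
  have hφd : ∀ t ∈ Set.Ioi a, HasDerivAt φ (f t / F t - 2 * (1 / (t - a))) t := by
    intro t ht
    have htpos : (0:ℝ) < t := lt_trans ha0' ht
    have h1 : HasDerivAt (fun u => Real.log (F u)) (f t / F t) t := by
      have := (hFd t htpos).log (Fpos t htpos).ne'
      exact this
    have h2 : HasDerivAt (fun u => Real.log (u - a)) (1 / (t - a)) t := by
      have hsub : HasDerivAt (fun u : ℝ => u - a) 1 t := (hasDerivAt_id t).sub_const a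
      have := hsub.log (sub_ne_zero.mpr (ne_of_gt ht))
      simpa using this
    exact h1.sub (h2.const_mul (2:ℝ))
  have hφcont : ContinuousOn φ (Set.Ici b) := fun t ht =>
    ((hφd t (lt_of_lt_of_le hb_gt ht)).continuousAt).continuousWithinAt
  have hφdiff : DifferentiableOn ℝ φ (interior (Set.Ici b)) := by
    rw [interior_Ici]
    intro t ht
    exact ((hφd t (lt_trans hb_gt ht)).differentiableAt).differentiableWithinAt
  have hφderiv_le : ∀ t ∈ interior (Set.Ici b), deriv φ t ≤ 0 := by
    rw [interior_Ici]
    intro t ht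
    have hta : a < t := lt_trans hb_gt ht
    have htpos : (0:ℝ) < t := lt_trans ha0' hta
    rw [(hφd t hta).deriv]
    have hFt : 0 < F t := Fpos t htpos
    have hsub : 0 < t - a := sub_pos.mpr hta
    have h := hkey t hta.le
    have : f t / F t ≤ 2 / (t - a) := by
      rw [div_le_div_iff₀ hFt hsub]
      linarith
    have h2 : (2:ℝ) * (1 / (t - a)) = 2 / (t - a) := by ring
    linarith [this, h2.le]
  have hφle : ∀ t ≥ b, φ t ≤ φ b := by
    intro t ht
    have := (convex_Ici b).image_sub_le_mul_sub_of_deriv_le hφcont hφdiff hφderiv_le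
      b self_mem_Ici t ht ht
    linarith
  -- F t ≤ exp (φ b) * (t - a)^2 for t ≥ b
  have hFle : ∀ t ≥ b, F t ≤ Real.exp (φ b) * (t - a) ^ 2 := by
    intro t ht
    have hta : a < t := lt_of_lt_of_le hb_gt ht
    have htpos : (0:ℝ) < t := lt_trans ha0' hta
    have hFt : 0 < F t := Fpos t htpos
    have hsub : 0 < t - a := sub_pos.mpr hta
    have h1 : Real.log (F t) ≤ φ b + 2 * Real.log (t - a) := by
      have h0 := hφle t ht
      simp only [hφ_def] at h0 ⊢
      linarith
    calc F t = Real.exp (Real.log (F t)) := (Real.exp_log hFt).symm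
      _ ≤ Real.exp (φ b + 2 * Real.log (t - a)) := Real.exp_le_exp.mpr h1
      _ = Real.exp (φ b) * Real.exp (2 * Real.log (t - a)) := Real.exp_add _ _
      _ = Real.exp (φ b) * (t - a) ^ 2 := by
          congr 1
          rw [show (2:ℝ) * Real.log (t - a) = Real.log ((t - a) ^ 2) by
            rw [Real.log_pow]; push_cast; ring]
          exact Real.exp_log (by positivity)
  -- contradiction with superlinearity
  set M : ℝ := 2 * Real.exp (φ b) with hM_def
  have hbound : ∀ t ≥ b, f t / t ≤ M := by
    intro t ht
    have hta : a < t := lt_of_lt_of_le hb_gt ht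
    have htpos : (0:ℝ) < t := lt_trans ha0' hta
    have hsub : 0 < t - a := sub_pos.mpr hta
    have h1 : f t * (t - a) ≤ 2 * F t := hkey t hta.le
    have h2 : F t ≤ Real.exp (φ b) * (t - a) ^ 2 := hFle t ht
    have h3 : f t * (t - a) ≤ 2 * Real.exp (φ b) * (t - a) ^ 2 := by nlinarith
    have h4 : f t ≤ 2 * Real.exp (φ b) * (t - a) := by
      have := (mul_le_mul_iff_of_pos_right hsub).mp (by nlinarith : f t * (t - a) ≤ (2 * Real.exp (φ b) * (t - a)) * (t - a))
      exact this
    have h5 : f t ≤ M * t := by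
      have hexp : (0:ℝ) < Real.exp (φ b) := Real.exp_pos _
      have : (t - a) ≤ t := by linarith
      calc f t ≤ 2 * Real.exp (φ b) * (t - a) := h4
        _ ≤ 2 * Real.exp (φ b) * t := by nlinarith
        _ = M * t := by rw [hM_def]
    rw [div_le_iff₀ htpos]
    linarith
  have : ∀ᶠ t in atTop, M < f t / t := hsuper.eventually_gt_atTop M
  obtain ⟨c, hc⟩ := eventually_atTop.mp this
  set t0 : ℝ := max b c with ht0
  have h1 : M < f t0 / t0 := hc t0 (le_max_right _ _)
  have h2 : f t0 / t0 ≤ M := hbound t0 (le_max_left _ _)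
  linarith
end

section
/- Let f satisfy (H) and additionally be convex (f' nondecreasing). Then liminf_{t→∞} f'(t)F(t)/f(t)² ≥ 1/2. -/
open Filter Set MeasureTheory intervalIntegral Topology

/-- If `f` satisfies (H) and is in addition convex (`f'` nondecreasing), then
`liminf_{t→∞} f'(t)F(t)/f(t)² ≥ 1/2`, where `F(t) = ∫₀^t f(s) ds`.
The liminf is taken in `EReal` so that it is well-defined even if the quotient tends to `∞`. -/
theorem stmt_2 (f f' F : ℝ → ℝ)
    (hf' : ∀ t ∈ Set.Ici (0:ℝ), HasDerivAt f (f' t) t)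
    (hf'cont : ContinuousOn f' (Set.Ici 0))
    (hmono : MonotoneOn f (Set.Ici 0))
    (hf0 : 0 < f 0)
    (hsuper : Tendsto (fun t => f t / t) atTop atTop)
    (hconv : MonotoneOn f' (Set.Ici 0))
    (hF : ∀ t, F t = ∫ s in (0:ℝ)..t, f s) :
    ((1/2 : ℝ) : EReal) ≤
      Filter.liminf (fun t => ((f' t * F t / (f t) ^ 2 : ℝ) : EReal)) atTop := by
  have hfc : ContinuousOn f (Set.Ici 0) := fun t ht =>
    (hf' t ht).continuousAt.continuousWithinAt
  have hfpos : ∀ t ∈ Set.Ici (0:ℝ), 0 < f t := fun t ht =>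
    lt_of_lt_of_le hf0 (hmono (by simp) ht ht)
  -- Key inequality: f t ^ 2 - f 0 ^ 2 ≤ 2 * (f' t * F t) for t ≥ 0
  have key : ∀ t : ℝ, 0 ≤ t → (f t)^2 - (f 0)^2 ≤ 2 * (f' t * F t) := by
    intro t ht
    have huicc : Set.uIcc (0:ℝ) t = Set.Icc 0 t := Set.uIcc_of_le ht
    have hsub : Set.uIcc (0:ℝ) t ⊆ Set.Ici 0 := by
      rw [huicc]; exact fun x hx => hx.1
    have hderiv : ∀ s ∈ Set.uIcc (0:ℝ) t,
        HasDerivAt (fun x => (f x)^2) (2 * f s * f' s) s := by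
      intro s hs
      have h := (hf' s (hsub hs)).fun_pow 2
      exact h.congr_deriv (by ring)
    have hcont1 : ContinuousOn (fun s => 2 * f s * f' s) (Set.uIcc (0:ℝ) t) :=
      ((continuousOn_const.mul (hfc.mono hsub)).mul (hf'cont.mono hsub))
    have hint1 : IntervalIntegrable (fun s => 2 * f s * f' s) volume 0 t :=
      hcont1.intervalIntegrable
    have hint2 : IntervalIntegrable (fun s => 2 * f' t * f s) volume 0 t :=
      (continuousOn_const.mul (hfc.mono hsub)).intervalIntegrable
    have hftc : ∫ s in (0:ℝ)..t, 2 * f s * f' s = (f t)^2 - (f 0)^2 :=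
      intervalIntegral.integral_eq_sub_of_hasDerivAt hderiv hint1
    have hmono2 : ∫ s in (0:ℝ)..t, 2 * f s * f' s ≤ ∫ s in (0:ℝ)..t, 2 * f' t * f s := by
      apply intervalIntegral.integral_mono_on ht hint1 hint2
      intro s hs
      have hs0 : (0:ℝ) ≤ s := hs.1
      have hfs : 0 ≤ f s := (hfpos s hs0).le
      have hf's : f' s ≤ f' t := hconv hs0 (Set.mem_Ici.mpr ht) hs.2
      nlinarith
    have heq : ∫ s in (0:ℝ)..t, 2 * f' t * f s = 2 * f' t * (∫ s in (0:ℝ)..t, f s) :=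
      intervalIntegral.integral_const_mul _ _
    rw [hF t]
    calc (f t)^2 - (f 0)^2 = ∫ s in (0:ℝ)..t, 2 * f s * f' s := hftc.symm
      _ ≤ ∫ s in (0:ℝ)..t, 2 * f' t * f s := hmono2
      _ = 2 * (f' t * (∫ s in (0:ℝ)..t, f s)) := by rw [heq]; ring
  -- Pointwise bound
  have hbound : ∀ t : ℝ, 0 ≤ t →
      (1/2 : ℝ) - (f 0)^2 / (2 * (f t)^2) ≤ f' t * F t / (f t)^2 := by
    intro t ht
    have hft := hfpos t ht
    have h := key t ht
    have h3 : ((f t)^2 - (f 0)^2) / (2*(f t)^2) ≤ f' t * F t / (f t)^2 := by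
      rw [div_le_div_iff₀ (by positivity) (by positivity)]
      nlinarith
    have h4 : (1/2:ℝ) - (f 0)^2/(2*(f t)^2) = ((f t)^2 - (f 0)^2)/(2*(f t)^2) := by
      field_simp
    rw [h4]
    exact h3
  -- f tends to infinity
  have hftop : Tendsto f atTop atTop := by
    apply tendsto_atTop_mono' _ _ tendsto_id
    filter_upwards [hsuper.eventually_ge_atTop 1, eventually_gt_atTop (0:ℝ)] with t h1 h2
    have := (le_div_iff₀ h2).mp h1
    simpa using this
  have htend : Tendsto (fun t => (1/2 : ℝ) - (f 0)^2 / (2 * (f t)^2)) atTop (𝓝 (1/2)) := by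
    have h1 : Tendsto (fun t => 2 * (f t)^2) atTop atTop := by
      apply Tendsto.const_mul_atTop (by norm_num : (0:ℝ) < 2)
      exact (tendsto_pow_atTop (two_ne_zero)).comp hftop
    have h2 : Tendsto (fun t => (f 0)^2 / (2 * (f t)^2)) atTop (𝓝 0) :=
      tendsto_const_nhds.div_atTop h1
    have := ((tendsto_const_nhds : Tendsto (fun _ : ℝ => (1/2:ℝ)) atTop (𝓝 (1/2))).sub h2)
    simpa using this
  have htendE : Tendsto (fun t => (((1/2 : ℝ) - (f 0)^2 / (2 * (f t)^2) : ℝ) : EReal))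
      atTop (𝓝 ((1/2 : ℝ) : EReal)) :=
    (continuous_coe_real_ereal.tendsto _).comp htend
  have hliminf_eq : Filter.liminf
      (fun t => (((1/2 : ℝ) - (f 0)^2 / (2 * (f t)^2) : ℝ) : EReal)) atTop
      = ((1/2 : ℝ) : EReal) := htendE.liminf_eq
  rw [← hliminf_eq]
  have hev : ∀ᶠ t in atTop, (((1/2 : ℝ) - (f 0)^2 / (2 * (f t)^2) : ℝ) : EReal) ≤ ((f' t * F t / (f t) ^ 2 : ℝ) : EReal) := by
    filter_upwards [eventually_ge_atTop (0:ℝ)] with t ht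
    exact EReal.coe_le_coe_iff.mpr (hbound t ht)
  exact Filter.liminf_le_liminf hev
end

section
/- Let f : [0,∞) → ℝ be C², positive, with f' positive, and let 0 < τ be such that f(t)f''(t)/f'(t)² ≥ τ for all t ≥ T (for some T > 0). Then the function t ↦ f'(t)/f(t)^τ is nondecreasing on [T,∞), and for all t ≥ T one has f'(t)F(t) ≥ f(t)^τ · ( f(t)^{2−τ} − f(T)^{2−τ} ) / (2−τ). -/
open Filter Set MeasureTheory intervalIntegral

/-- If `f : [0,∞) → ℝ` is C², positive with `f' > 0`, `0 < τ < 2`, `T > 0`, and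
`f(t)f''(t)/f'(t)² ≥ τ` for all `t ≥ T`, then `t ↦ f'(t)/f(t)^τ` is nondecreasing on `[T,∞)`
and `f'(t)F(t) ≥ f(t)^τ (f(t)^{2−τ} − f(T)^{2−τ})/(2−τ)` for all `t ≥ T`,
where `F(t) = ∫₀^t f(s) ds`. -/
theorem stmt_3 (f f' f'' F : ℝ → ℝ) (τ T : ℝ)
    (hf' : ∀ t ∈ Set.Ici (0:ℝ), HasDerivAt f (f' t) t)
    (hf'' : ∀ t ∈ Set.Ici (0:ℝ), HasDerivAt f' (f'' t) t)
    (hf''cont : ContinuousOn f'' (Set.Ici 0))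
    (hfpos : ∀ t ≥ (0:ℝ), 0 < f t)
    (hf'pos : ∀ t ≥ (0:ℝ), 0 < f' t)
    (hτpos : 0 < τ) (hτ2 : τ < 2) (hT : 0 < T)
    (hyp : ∀ t ≥ T, τ ≤ f t * f'' t / (f' t) ^ 2)
    (hF : ∀ t, F t = ∫ s in (0:ℝ)..t, f s) :
    MonotoneOn (fun t => f' t / f t ^ τ) (Set.Ici T) ∧
      ∀ t ≥ T, f t ^ τ * ((f t ^ (2 - τ) - f T ^ (2 - τ)) / (2 - τ)) ≤ f' t * F t := by
  -- derivative of g = f'/f^τ on Ici 0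
  have hg : ∀ t ∈ Set.Ici (0:ℝ), HasDerivAt (fun t => f' t / f t ^ τ)
      ((f'' t * f t ^ τ - f' t * (f' t * τ * f t ^ (τ - 1))) / (f t ^ τ) ^ 2) t := by
    intro t ht
    have h1 := (hf' t ht).rpow_const (p := τ) (Or.inl (ne_of_gt (hfpos t ht)))
    exact (hf'' t ht).div h1 (ne_of_gt (Real.rpow_pos_of_pos (hfpos t ht) τ))
  have hcont_g : ContinuousOn (fun t => f' t / f t ^ τ) (Set.Ici T) := by
    intro t ht
    have ht0 : (0:ℝ) ≤ t := le_trans hT.le ht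
    exact ((hg t ht0).continuousAt).continuousWithinAt
  have hmono : MonotoneOn (fun t => f' t / f t ^ τ) (Set.Ici T) := by
    apply monotoneOn_of_hasDerivWithinAt_nonneg (convex_Ici T) hcont_g
      (f' := fun t => (f'' t * f t ^ τ - f' t * (f' t * τ * f t ^ (τ - 1))) / (f t ^ τ) ^ 2)
    · intro x hx
      rw [interior_Ici] at hx
      exact (hg x (le_trans hT.le hx.le)).hasDerivWithinAt
    · intro x hx
      rw [interior_Ici] at hx
      have hx0 : (0:ℝ) ≤ x := le_trans hT.le hx.le
      have hfx := hfpos x hx0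
      have hf'x := hf'pos x hx0
      have hkey : τ * f' x ^ 2 ≤ f x * f'' x := by
        have := hyp x hx.le
        rw [le_div_iff₀ (by positivity)] at this
        linarith
      apply div_nonneg _ (by positivity)
      have hsplit : f x ^ τ = f x ^ (τ - 1) * f x := by
        rw [← Real.rpow_add_one (ne_of_gt hfx)]
        ring_nf
      have hp : (0:ℝ) < f x ^ (τ - 1) := Real.rpow_pos_of_pos hfx _
      have : f'' x * f x ^ τ - f' x * (f' x * τ * f x ^ (τ - 1))
          = f x ^ (τ - 1) * (f x * f'' x - τ * f' x ^ 2) := by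
        rw [hsplit]; ring
      rw [this]
      exact mul_nonneg hp.le (by linarith)
  refine ⟨hmono, ?_⟩
  intro t ht
  have ht0 : (0:ℝ) ≤ t := le_trans hT.le ht
  have hT0 : (0:ℝ) ≤ T := hT.le
  have hft := hfpos t ht0
  have hf't := hf'pos t ht0
  -- continuity facts
  have hcf : ContinuousOn f (Set.Ici 0) :=
    fun s hs => ((hf' s hs).continuousAt).continuousWithinAt
  have hcf' : ContinuousOn f' (Set.Ici 0) :=
    fun s hs => ((hf'' s hs).continuousAt).continuousWithinAt
  have hsub : Set.uIcc T t ⊆ Set.Ici (0:ℝ) := by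
    rw [Set.uIcc_of_le ht]
    exact fun s hs => le_trans hT0 hs.1
  -- integrand h s = f' s * f s ^ (1-τ), continuous on [T,t]
  have hcont_h : ContinuousOn (fun s => f' s * f s ^ (1 - τ)) (Set.uIcc T t) := by
    apply ContinuousOn.mul (hcf'.mono hsub)
    intro s hs
    exact (Real.continuousAt_rpow_const _ _
      (Or.inl (ne_of_gt (hfpos s (hsub hs))))).comp_continuousWithinAt
      ((hcf.mono hsub) s hs)
  have hint_h : IntervalIntegrable (fun s => f' s * f s ^ (1 - τ)) volume T t :=
    hcont_h.intervalIntegrable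
  have hint_f : IntervalIntegrable f volume T t :=
    ((hcf.mono hsub).intervalIntegrable)
  -- FTC: ∫_T^t f' f^{1-τ} = (f t^{2-τ} - f T^{2-τ})/(2-τ)
  have hFTC : ∫ s in T..t, f' s * f s ^ (1 - τ)
      = (f t ^ (2 - τ) - f T ^ (2 - τ)) / (2 - τ) := by
    have h2τ : (2:ℝ) - τ ≠ 0 := by linarith
    have : ∫ s in T..t, f' s * f s ^ (1 - τ)
        = f t ^ (2 - τ) / (2 - τ) - f T ^ (2 - τ) / (2 - τ) := by
      apply intervalIntegral.integral_eq_sub_of_hasDerivAt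
      · intro s hs
        have hs0 : s ∈ Set.Ici (0:ℝ) := hsub hs
        have hfs := hfpos s hs0
        have hD := ((hf' s hs0).rpow_const
          (p := 2 - τ) (Or.inl (ne_of_gt hfs))).div_const (2 - τ)
        have : f' s * (2 - τ) * f s ^ (2 - τ - 1) / (2 - τ) = f' s * f s ^ (1 - τ) := by
          rw [show (2:ℝ) - τ - 1 = 1 - τ by ring]
          field_simp
        rwa [this] at hD
      · exact hint_h
    rw [this, ← sub_div]
  -- pointwise comparison on [T,t]
  have hpt : ∀ s ∈ Set.Icc T t,
      f t ^ τ / f' t * (f' s * f s ^ (1 - τ)) ≤ f s := by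
    intro s hs
    have hs0 : (0:ℝ) ≤ s := le_trans hT0 hs.1
    have hfs := hfpos s hs0
    have hf's := hf'pos s hs0
    have hmle : f' s / f s ^ τ ≤ f' t / f t ^ τ :=
      hmono hs.1 (le_trans hs.1 hs.2 : T ≤ t) hs.2
    have hfsτ : (0:ℝ) < f s ^ τ := Real.rpow_pos_of_pos hfs τ
    have hftτ : (0:ℝ) < f t ^ τ := Real.rpow_pos_of_pos hft τ
    have h1τ : f s ^ (1 - τ) = f s / f s ^ τ := by
      rw [Real.rpow_sub hfs, Real.rpow_one]
    rw [h1τ]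
    rw [div_mul_eq_mul_div, div_le_iff₀ hf't, ← sub_nonneg]
    have key : f' s / f s ^ τ * f s ≤ f' t / f t ^ τ * f s :=
      mul_le_mul_of_nonneg_right hmle hfs.le
    have expand : f s * f' t - f t ^ τ * (f' s * (f s / f s ^ τ))
        = f t ^ τ * (f' t / f t ^ τ * f s - f' s / f s ^ τ * f s) := by
      field_simp
    rw [expand]
    exact mul_nonneg hftτ.le (by linarith)
  -- integrate the comparison
  have hint_lhs : IntervalIntegrable (fun s => f t ^ τ / f' t * (f' s * f s ^ (1 - τ)))
      volume T t := (hint_h.const_mul _)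
  have hcomp : ∫ s in T..t, f t ^ τ / f' t * (f' s * f s ^ (1 - τ))
      ≤ ∫ s in T..t, f s :=
    intervalIntegral.integral_mono_on ht hint_lhs hint_f hpt
  rw [intervalIntegral.integral_const_mul, hFTC] at hcomp
  -- F t ≥ ∫_T^t f
  have hsub2 : Set.uIcc 0 T ⊆ Set.Ici (0:ℝ) := by
    rw [Set.uIcc_of_le hT0]; exact fun s hs => hs.1
  have hint0T : IntervalIntegrable f volume 0 T := ((hcf.mono hsub2).intervalIntegrable)
  have hadd : (∫ s in (0:ℝ)..T, f s) + ∫ s in T..t, f s = ∫ s in (0:ℝ)..t, f s :=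
    intervalIntegral.integral_add_adjacent_intervals hint0T hint_f
  have h0T : (0:ℝ) ≤ ∫ s in (0:ℝ)..T, f s := by
    apply intervalIntegral.integral_nonneg hT0
    intro s hs
    exact (hfpos s hs.1).le
  have hFt : (∫ s in T..t, f s) ≤ F t := by
    rw [hF t, ← hadd]; linarith
  have hfinal : f t ^ τ / f' t * ((f t ^ (2 - τ) - f T ^ (2 - τ)) / (2 - τ)) ≤ F t :=
    le_trans hcomp hFt
  calc f t ^ τ * ((f t ^ (2 - τ) - f T ^ (2 - τ)) / (2 - τ))
      = f' t * (f t ^ τ / f' t * ((f t ^ (2 - τ) - f T ^ (2 - τ)) / (2 - τ))) := by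
        rw [show f' t * (f t ^ τ / f' t * ((f t ^ (2 - τ) - f T ^ (2 - τ)) / (2 - τ)))
            = f t ^ τ * ((f t ^ (2 - τ) - f T ^ (2 - τ)) / (2 - τ)) * (f' t / f' t) by ring,
          div_self (ne_of_gt hf't), mul_one]
    _ ≤ f' t * F t := mul_le_mul_of_nonneg_left hfinal hf't.le
end

section
/- Let f satisfy (H), be C² and convex with f' > 0, and suppose τ₋ := liminf_{t→∞} f(t)f''(t)/f'(t)² > 0. Then liminf_{t→∞} f'(t)F(t)/f(t)² ≥ 1/(2 − τ₋), which is strictly greater than 1/2. -/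
open Filter Set MeasureTheory intervalIntegral
open scoped Topology

/-- If `f` satisfies (H), is C² and convex (`f'` nondecreasing) with `f' > 0`, and
`τ₋ := liminf_{t→∞} f(t)f''(t)/f'(t)²` satisfies `0 < τ₋ < 2`, then
`liminf_{t→∞} f'(t)F(t)/f(t)² ≥ 1/(2 − τ₋) > 1/2`, where `F(t) = ∫₀^t f(s) ds`.
Liminfs are taken in `EReal` so that they are well-defined. -/
theorem stmt_4 (f f' f'' F : ℝ → ℝ) (τ : ℝ)
    (hf' : ∀ t ∈ Set.Ici (0:ℝ), HasDerivAt f (f' t) t)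
    (hf'' : ∀ t ∈ Set.Ici (0:ℝ), HasDerivAt f' (f'' t) t)
    (hf''cont : ContinuousOn f'' (Set.Ici 0))
    (hmono : MonotoneOn f (Set.Ici 0))
    (hconv : MonotoneOn f' (Set.Ici 0))
    (hf'pos : ∀ t ≥ (0:ℝ), 0 < f' t)
    (hf0 : 0 < f 0)
    (hsuper : Tendsto (fun t => f t / t) atTop atTop)
    (hF : ∀ t, F t = ∫ s in (0:ℝ)..t, f s)
    (hliminf :
      Filter.liminf (fun t => ((f t * f'' t / (f' t) ^ 2 : ℝ) : EReal)) atTop = (τ : EReal))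
    (hτpos : 0 < τ) (hτ2 : τ < 2) :
    ((1 / (2 - τ) : ℝ) : EReal) ≤
        Filter.liminf (fun t => ((f' t * F t / (f t) ^ 2 : ℝ) : EReal)) atTop ∧
      (1/2 : ℝ) < 1 / (2 - τ) := by
  have h2τ : (0:ℝ) < 2 - τ := by linarith
  constructor
  · -- main inequality
    set L := Filter.liminf (fun t => ((f' t * F t / (f t) ^ 2 : ℝ) : EReal)) atTop with hLdef
    -- basic positivity / continuity facts
    have hfpos : ∀ t ≥ (0:ℝ), 0 < f t := fun t ht =>
      lt_of_lt_of_le hf0 (hmono self_mem_Ici ht ht)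
    have hcf : ContinuousOn f (Set.Ici 0) := fun t ht =>
      (hf' t ht).continuousAt.continuousWithinAt
    have hcf' : ContinuousOn f' (Set.Ici 0) := fun t ht =>
      (hf'' t ht).continuousAt.continuousWithinAt
    have hFint : ∀ a b : ℝ, 0 ≤ a → a ≤ b → IntervalIntegrable f volume a b := by
      intro a b ha hab
      apply (hcf.mono _).intervalIntegrable
      rw [Set.uIcc_of_le hab]
      exact fun x hx => le_trans ha hx.1
    have hFge : ∀ t ≥ (0:ℝ), f 0 * t ≤ F t := by
      intro t ht
      rw [hF]
      have h := intervalIntegral.integral_mono_on ht intervalIntegrable_const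
        (hFint 0 t le_rfl ht) (fun s hs => hmono self_mem_Ici hs.1 hs.1)
      simpa [mul_comm] using h
    have hFtop : Tendsto F atTop atTop := by
      apply tendsto_atTop_mono' atTop (eventually_atTop.2 ⟨0, fun t ht => hFge t ht⟩)
      exact Tendsto.const_mul_atTop hf0 tendsto_id
    -- derivative of φ = f²/f'
    have hφderiv : ∀ t ∈ Set.Ici (0:ℝ), HasDerivAt (fun s => f s ^ 2 / f' s)
        (2 * f t - f t ^ 2 * f'' t / f' t ^ 2) t := by
      intro t ht
      have h0 : f' t ≠ 0 := ne_of_gt (hf'pos t ht)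
      have h := ((hf' t ht).pow 2).div (hf'' t ht) h0
      refine h.congr_deriv ?_
      rw [div_eq_iff (pow_ne_zero 2 h0)]
      simp only [Pi.pow_apply, Nat.cast_ofNat, show (2:ℕ) - 1 = 1 from rfl, pow_one]
      field_simp
    have hDcont : ContinuousOn (fun t => 2 * f t - f t ^ 2 * f'' t / f' t ^ 2) (Set.Ici 0) := by
      apply ContinuousOn.sub (continuousOn_const.mul hcf)
      exact ((hcf.pow 2).mul hf''cont).div (hcf'.pow 2)
        (fun t ht => pow_ne_zero 2 (ne_of_gt (hf'pos t ht)))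
    -- key step for each c < 1/(2-τ)
    have key : ∀ c : ℝ, c < 1 / (2 - τ) → (c : EReal) ≤ L := by
      intro c hc
      obtain ⟨ε, hε, hck⟩ : ∃ ε : ℝ, 0 < ε ∧ c < 1 / (2 - τ + ε) := by
        rcases le_or_gt c 0 with h | h
        · exact ⟨1, one_pos, lt_of_le_of_lt h (by positivity)⟩
        · have h1 : c * (2 - τ) < 1 := by
            have := (lt_div_iff₀ h2τ).1 hc
            linarith
          have h2 : 2 - τ < 1 / c := by
            rw [lt_div_iff₀ h]
            linarith [h1]
          refine ⟨(1 / c - (2 - τ)) / 2, by linarith, ?_⟩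
          have hk : 2 - τ + (1 / c - (2 - τ)) / 2 < 1 / c := by linarith
          have hkpos : 0 < 2 - τ + (1 / c - (2 - τ)) / 2 := by linarith
          have := one_div_lt_one_div_of_lt hkpos hk
          rwa [one_div_one_div] at this
      set k : ℝ := 2 - τ + ε with hkdef
      have hkpos : 0 < k := by simp only [hkdef]; linarith
      -- eventually f f''/f'² > τ - ε
      have hev : ∀ᶠ t in atTop, ((τ - ε : ℝ) : EReal) < ((f t * f'' t / (f' t) ^ 2 : ℝ) : EReal) :=
        Filter.eventually_lt_of_lt_liminf
          (by rw [hliminf]; exact_mod_cast (by linarith : τ - ε < τ))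
      obtain ⟨T₀, hT₀⟩ := eventually_atTop.1 hev
      set T : ℝ := max T₀ 1 with hTdef
      have hT0 : (0:ℝ) ≤ T := le_trans zero_le_one (le_max_right _ _)
      have hr : ∀ t ≥ T, τ - ε < f t * f'' t / f' t ^ 2 := by
        intro t ht
        have := hT₀ t (le_trans (le_max_left _ _) ht)
        exact_mod_cast this
      -- pointwise derivative bound on [T, ∞)
      have hDle : ∀ t ∈ Set.Ici (0:ℝ), t ≥ T →
          2 * f t - f t ^ 2 * f'' t / f' t ^ 2 ≤ k * f t := by
        intro t ht htT
        have hfs : 0 < f t := hfpos t ht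
        have hrt := hr t htT
        have hprod : 0 ≤ f t * (f t * f'' t / f' t ^ 2 - (τ - ε)) :=
          mul_nonneg hfs.le (by linarith)
        have heq : f t ^ 2 * f'' t / f' t ^ 2 = f t * (f t * f'' t / f' t ^ 2) := by ring
        rw [heq]
        simp only [hkdef]
        nlinarith [hprod]
      -- integral inequality: φ t ≤ φ T + k (F t - F T) for t ≥ T
      have hineq : ∀ t ≥ T, f t ^ 2 / f' t ≤ f T ^ 2 / f' T + k * (F t - F T) := by
        intro t ht
        have ht0 : (0:ℝ) ≤ t := le_trans hT0 ht
        have hsub : Set.uIcc T t ⊆ Set.Ici (0:ℝ) := by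
          rw [Set.uIcc_of_le ht]
          exact fun x hx => le_trans hT0 hx.1
        have hDint : IntervalIntegrable (fun s => 2 * f s - f s ^ 2 * f'' s / f' s ^ 2)
            volume T t := (hDcont.mono hsub).intervalIntegrable
        have hfint : IntervalIntegrable f volume T t := hFint T t hT0 ht
        have h1 : ∫ s in T..t, (2 * f s - f s ^ 2 * f'' s / f' s ^ 2) =
            f t ^ 2 / f' t - f T ^ 2 / f' T :=
          intervalIntegral.integral_eq_sub_of_hasDerivAt
            (fun x hx => hφderiv x (hsub hx)) hDint
        have h2 : ∫ s in T..t, (2 * f s - f s ^ 2 * f'' s / f' s ^ 2) ≤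
            ∫ s in T..t, k * f s := by
          apply intervalIntegral.integral_mono_on ht hDint (hfint.const_mul k)
          intro s hs
          have hs0 : (0:ℝ) ≤ s := le_trans hT0 hs.1
          exact hDle s hs0 hs.1
        have h3 : ∫ s in T..t, k * f s = k * (F t - F T) := by
          rw [intervalIntegral.integral_const_mul]
          have hadd := intervalIntegral.integral_add_adjacent_intervals
            (hFint 0 T le_rfl hT0) hfint
          rw [hF t, hF T]
          have : ∫ s in T..t, f s = (∫ s in (0:ℝ)..t, f s) - ∫ s in (0:ℝ)..T, f s := by
            linarith [hadd]
          rw [this]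
        rw [h1] at h2
        rw [h3] at h2
        linarith
      set C : ℝ := f T ^ 2 / f' T - k * F T with hCdef
      -- G bound
      have hGge : ∀ t ≥ T, F t / (k * F t + C) ≤ f' t * F t / f t ^ 2 := by
        intro t ht
        have ht0 : (0:ℝ) ≤ t := le_trans hT0 ht
        have ht1 : (1:ℝ) ≤ t := le_trans (le_max_right _ _) ht
        have hφpos : 0 < f t ^ 2 / f' t := div_pos (pow_pos (hfpos t ht0) 2) (hf'pos t ht0)
        have hFt : 0 < F t := lt_of_lt_of_le (by nlinarith [hfpos t ht0]) (hFge t ht0)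
        have hle : f t ^ 2 / f' t ≤ k * F t + C := by
          have := hineq t ht
          simp only [hCdef]
          linarith
        have h1 : F t / (k * F t + C) ≤ F t / (f t ^ 2 / f' t) :=
          div_le_div_of_nonneg_left hFt.le hφpos hle
        have h2 : F t / (f t ^ 2 / f' t) = f' t * F t / f t ^ 2 := by
          rw [div_div_eq_mul_div]
          ring
        linarith [h1, h2.symm.le]
      -- limit of lower bound
      have htend : Tendsto (fun t => F t / (k * F t + C)) atTop (𝓝 (1 / k)) := by
        have h0 : Tendsto (fun t => C / F t) atTop (𝓝 0) :=
          Tendsto.div_atTop tendsto_const_nhds hFtop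
        have h1 : Tendsto (fun t => k + C / F t) atTop (𝓝 k) := by
          have h1' := (tendsto_const_nhds (x := k) (f := atTop (α := ℝ))).add h0
          simpa using h1'
        have h2 : Tendsto (fun t => (k + C / F t)⁻¹) atTop (𝓝 k⁻¹) :=
          h1.inv₀ (ne_of_gt hkpos)
        rw [one_div]
        apply h2.congr'
        filter_upwards [hFtop.eventually_gt_atTop 0] with t hFt
        have hFne : F t ≠ 0 := ne_of_gt hFt
        have : k + C / F t = (k * F t + C) / F t := by field_simp
        rw [this, inv_div]
      have hev2 : ∀ᶠ t in atTop, c < f' t * F t / f t ^ 2 := by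
        have hck' : c < 1 / k := hck
        filter_upwards [htend.eventually (eventually_gt_nhds hck'),
          eventually_ge_atTop T] with t h1 h2
        exact lt_of_lt_of_le h1 (hGge t h2)
      exact Filter.le_liminf_of_le (h := by
        filter_upwards [hev2] with t ht
        exact_mod_cast ht.le)
    -- conclude by approximation
    refine le_of_forall_lt fun b hb => ?_
    induction b using EReal.rec with
    | bot =>
        refine lt_of_lt_of_le (EReal.bot_lt_coe (1 / (2 - τ) - 1)) (key _ (by linarith))
    | coe y =>
        have hy : y < 1 / (2 - τ) := by exact_mod_cast hb
        have hmid : ((y + 1 / (2 - τ)) / 2 : ℝ) < 1 / (2 - τ) := by linarith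
        calc ((y : ℝ) : EReal) < (((y + 1 / (2 - τ)) / 2 : ℝ) : EReal) := by
              exact_mod_cast (by linarith : y < (y + 1 / (2 - τ)) / 2)
          _ ≤ L := key _ hmid
    | top => exact absurd hb (not_lt.2 le_top)
  · rw [div_lt_div_iff₀ two_pos h2τ]
    nlinarith
end

section
/- Let f : [0,∞) → ℝ be C¹, positive and nondecreasing, let 1/2 < β₁ < 1 and β₃ > 0, and suppose β₁ < f'(t)F(t)/f(t)² < β₃ for all t ≥ t₀ > 0. Define ξ(t) := β₁ f(t)/F(t) for t ≥ t₀. Then for all t ≥ t₀: ξ'(t) + ξ(t)² = β₁( f'(t)/F(t) − (1−β₁) f(t)²/F(t)² ) ≥ (2β₁−1) f'(t)/F(t) ≥ ((2β₁−1)/β₃) (f'(t)/f(t))². -/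
open Filter Set MeasureTheory intervalIntegral

/-- Let `f : [0,∞) → ℝ` be C¹, positive and nondecreasing, `1/2 < β₁ < 1`,
`β₃ > 0`, `t₀ > 0`, with `β₁ < f'(t)F(t)/f(t)² < β₃` for `t ≥ t₀`, and set
`ξ(t) := β₁ f(t)/F(t)`. Then for all `t ≥ t₀`:
`ξ'(t) + ξ(t)² = β₁(f'(t)/F(t) − (1−β₁) f(t)²/F(t)²) ≥ (2β₁−1) f'(t)/F(t)
  ≥ ((2β₁−1)/β₃)(f'(t)/f(t))²`, where `F(t) = ∫₀^t f(s) ds`. -/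
theorem stmt_8 (f f' F : ℝ → ℝ) (β₁ β₃ t₀ : ℝ)
    (hf' : ∀ t ∈ Set.Ici (0:ℝ), HasDerivAt f (f' t) t)
    (hf'cont : ContinuousOn f' (Set.Ici 0))
    (hpos : ∀ t ≥ (0:ℝ), 0 < f t)
    (hmono : MonotoneOn f (Set.Ici 0))
    (hβ₁ : 1/2 < β₁) (hβ₁1 : β₁ < 1) (hβ₃ : 0 < β₃) (ht₀ : 0 < t₀)
    (hyp : ∀ t ≥ t₀, β₁ < f' t * F t / (f t) ^ 2 ∧ f' t * F t / (f t) ^ 2 < β₃)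
    (hF : ∀ t, F t = ∫ s in (0:ℝ)..t, f s) :
    ∀ t ≥ t₀,
      deriv (fun s => β₁ * f s / F s) t + (β₁ * f t / F t) ^ 2
          = β₁ * (f' t / F t - (1 - β₁) * (f t) ^ 2 / (F t) ^ 2) ∧
        (2 * β₁ - 1) * (f' t / F t)
          ≤ deriv (fun s => β₁ * f s / F s) t + (β₁ * f t / F t) ^ 2 ∧
        (2 * β₁ - 1) / β₃ * (f' t / f t) ^ 2 ≤ (2 * β₁ - 1) * (f' t / F t) := by
  intro t ht
  have ht0 : (0:ℝ) < t := lt_of_lt_of_le ht₀ ht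
  have hcont : ContinuousOn f (Set.Ici 0) := fun s hs =>
    ((hf' s hs).continuousAt).continuousWithinAt
  -- positivity of F t
  have hint : IntervalIntegrable f MeasureTheory.volume 0 t := by
    apply ContinuousOn.intervalIntegrable
    apply hcont.mono
    rw [Set.uIcc_of_le ht0.le]
    exact fun x hx => hx.1
  have hFpos : 0 < F t := by
    rw [hF t]
    apply intervalIntegral.intervalIntegral_pos_of_pos_on hint
    · exact fun x hx => hpos x hx.1.le
    · exact ht0
  have hfpos : 0 < f t := hpos t ht0.le
  -- derivative of F at t is f t
  have hFeq : F = fun u => ∫ s in (0:ℝ)..u, f s := funext hF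
  have hFd : HasDerivAt F (f t) t := by
    rw [hFeq]
    apply intervalIntegral.integral_hasDerivAt_right hint
    · exact (hcont.mono (fun x hx => le_of_lt hx)).stronglyMeasurableAtFilter
        isOpen_Ioi t ht0
    · exact (hf' t ht0.le).continuousAt
  have hd : HasDerivAt (fun s => β₁ * f s / F s)
      ((β₁ * f' t * F t - β₁ * f t * f t) / F t ^ 2) t :=
    ((hf' t ht0.le).const_mul β₁).div hFd hFpos.ne'
  have hderiv : deriv (fun s => β₁ * f s / F s) t
      = (β₁ * f' t * F t - β₁ * f t * f t) / F t ^ 2 := hd.deriv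
  obtain ⟨h1, h2⟩ := hyp t ht
  have h1' : β₁ * f t ^ 2 < f' t * F t := by
    rw [lt_div_iff₀ (by positivity)] at h1; linarith
  have h2' : f' t * F t < β₃ * f t ^ 2 := by
    rw [div_lt_iff₀ (by positivity)] at h2; linarith
  have hf'pos : 0 < f' t := by
    nlinarith [sq_nonneg (f t), mul_pos hfpos hfpos]
  refine ⟨?_, ?_, ?_⟩
  · rw [hderiv]
    field_simp
    ring
  · rw [hderiv, ← sub_nonneg]
    have heq : (β₁ * f' t * F t - β₁ * f t * f t) / F t ^ 2 + (β₁ * f t / F t) ^ 2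
        - (2 * β₁ - 1) * (f' t / F t)
        = ((1 - β₁) * (f' t * F t - β₁ * f t ^ 2)) / F t ^ 2 := by
      field_simp
      ring
    rw [heq]
    apply div_nonneg _ (by positivity)
    nlinarith
  · rw [← sub_nonneg]
    have heq : (2 * β₁ - 1) * (f' t / F t) - (2 * β₁ - 1) / β₃ * (f' t / f t) ^ 2
        = ((2 * β₁ - 1) * (f' t * (β₃ * f t ^ 2 - f' t * F t))) / (β₃ * f t ^ 2 * F t) := by
      field_simp
    rw [heq]
    apply div_nonneg _ (by positivity)
    have h3 : 0 < 2 * β₁ - 1 := by linarith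
    have h4 : 0 < β₃ * f t ^ 2 - f' t * F t := by linarith
    positivity
end

section
/- Let f : [0,∞) → ℝ be continuous and positive, let β₃ ∈ (0,1), t₀ > 0 and C₁ > 0, and suppose f(t) ≤ C₁ F(t)^{β₃} for all t ≥ t₀. Then there exist constants C₂, C₃ > 0 and t₁ ≥ t₀ such that F(t) ≤ C₂ t^{1/(1−β₃)} and f(t) ≤ C₃ t^{β₃/(1−β₃)} for all t ≥ t₁. -/
open Filter Set MeasureTheory intervalIntegral

/-- Let `f : [0,∞) → ℝ` be continuous and positive, `β₃ ∈ (0,1)`, `t₀ > 0`,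
`C₁ > 0`, with `f(t) ≤ C₁ F(t)^{β₃}` for all `t ≥ t₀`. Then there are `C₂, C₃ > 0` and
`t₁ ≥ t₀` with `F(t) ≤ C₂ t^{1/(1−β₃)}` and `f(t) ≤ C₃ t^{β₃/(1−β₃)}` for all `t ≥ t₁`,
where `F(t) = ∫₀^t f(s) ds`. -/
theorem stmt_10 (f F : ℝ → ℝ) (β₃ t₀ C₁ : ℝ)
    (hf : ContinuousOn f (Set.Ici 0))
    (hpos : ∀ t ≥ (0:ℝ), 0 < f t)
    (hβ₃0 : 0 < β₃) (hβ₃1 : β₃ < 1) (ht₀ : 0 < t₀) (hC₁ : 0 < C₁)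
    (hyp : ∀ t ≥ t₀, f t ≤ C₁ * F t ^ β₃)
    (hF : ∀ t, F t = ∫ s in (0:ℝ)..t, f s) :
    ∃ C₂ > (0:ℝ), ∃ C₃ > (0:ℝ), ∃ t₁ ≥ t₀,
      ∀ t ≥ t₁, F t ≤ C₂ * t ^ ((1:ℝ) / (1 - β₃)) ∧ f t ≤ C₃ * t ^ (β₃ / (1 - β₃)) := by
  have hβ : (0:ℝ) < 1 - β₃ := by linarith
  -- interval integrability
  have hint : ∀ x : ℝ, 0 ≤ x → IntervalIntegrable f MeasureTheory.volume 0 x := by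
    intro x hx
    apply ContinuousOn.intervalIntegrable
    apply hf.mono
    rw [Set.uIcc_of_le hx]
    exact fun y hy => hy.1
  -- positivity of F
  have hFpos : ∀ x : ℝ, 0 < x → 0 < F x := by
    intro x hx
    rw [hF x]
    exact intervalIntegral.intervalIntegral_pos_of_pos_on (hint x hx.le)
      (fun y hy => hpos y hy.1.le) hx
  -- derivative of F
  have hFderiv : ∀ x : ℝ, 0 < x → HasDerivAt F (f x) x := by
    intro x hx
    have hco : ContinuousOn f (Set.Ioi (0:ℝ)) := hf.mono (fun y hy => Set.mem_Ici.mpr (le_of_lt (Set.mem_Ioi.mp hy)))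
    have hca : ContinuousAt f x := by
      have := hf.continuousAt (Ici_mem_nhds hx)
      exact this
    have h := intervalIntegral.integral_hasDerivAt_right (hint x hx.le)
      (hco.stronglyMeasurableAtFilter isOpen_Ioi x hx) hca
    have : F = fun u => F u := rfl
    refine HasDerivAt.congr_of_eventuallyEq h ?_
    filter_upwards with u
    exact (hF u)
  -- derivative of G := F ^ (1 - β₃) on [t₀, ∞)
  set p : ℝ := 1 - β₃ with hp
  set G : ℝ → ℝ := fun x => F x ^ p with hG
  have hGderiv : ∀ x : ℝ, t₀ ≤ x → HasDerivAt G (f x * p * F x ^ (p - 1)) x := by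
    intro x hx
    have hx0 : 0 < x := lt_of_lt_of_le ht₀ hx
    exact (hFderiv x hx0).rpow_const (Or.inl (ne_of_gt (hFpos x hx0)))
  -- bound on the derivative
  have hbound : ∀ x : ℝ, t₀ ≤ x → ‖f x * p * F x ^ (p - 1)‖ ≤ p * C₁ := by
    intro x hx
    have hx0 : 0 < x := lt_of_lt_of_le ht₀ hx
    have hFx : 0 < F x := hFpos x hx0
    have h1 : f x * p * F x ^ (p - 1) ≤ C₁ * F x ^ β₃ * p * F x ^ (p - 1) := by
      have := hyp x hx
      have hpow : (0:ℝ) < F x ^ (p - 1) := Real.rpow_pos_of_pos hFx _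
      exact mul_le_mul_of_nonneg_right (mul_le_mul_of_nonneg_right this hβ.le) hpow.le
    have h2 : C₁ * F x ^ β₃ * p * F x ^ (p - 1) = p * C₁ := by
      have : F x ^ β₃ * F x ^ (p - 1) = 1 := by
        rw [← Real.rpow_add hFx]
        have : β₃ + (p - 1) = 0 := by rw [hp]; ring
        rw [this, Real.rpow_zero]
      calc C₁ * F x ^ β₃ * p * F x ^ (p - 1)
          = p * C₁ * (F x ^ β₃ * F x ^ (p - 1)) := by ring
        _ = p * C₁ := by rw [this, mul_one]
    have h3 : (0:ℝ) < f x * p * F x ^ (p - 1) := by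
      have := hpos x hx0.le
      positivity
    rw [Real.norm_eq_abs, abs_of_pos h3]
    linarith
  -- mean value inequality on [t₀, t]
  have hMVT : ∀ t : ℝ, t₀ ≤ t → G t ≤ G t₀ + p * C₁ * (t - t₀) := by
    intro t ht
    have := Convex.norm_image_sub_le_of_norm_hasDerivWithin_le
      (f := G) (f' := fun x => f x * p * F x ^ (p - 1)) (s := Set.Icc t₀ t) (C := p * C₁)
      (fun x hx => (hGderiv x hx.1).hasDerivWithinAt)
      (fun x hx => hbound x hx.1) (convex_Icc t₀ t)
      (Set.left_mem_Icc.mpr ht) (Set.right_mem_Icc.mpr ht)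
    rw [Real.norm_eq_abs, Real.norm_eq_abs] at this
    have h1 : G t - G t₀ ≤ p * C₁ * |t - t₀| := le_trans (le_abs_self _) this
    rw [abs_of_nonneg (by linarith)] at h1
    linarith
  -- the linear bound: G t ≤ K * t for t ≥ t₀
  set K : ℝ := G t₀ / t₀ + p * C₁ with hK
  have hGt₀pos : 0 < G t₀ := Real.rpow_pos_of_pos (hFpos t₀ ht₀) p
  have hKpos : 0 < K := by
    have : 0 < G t₀ / t₀ := div_pos hGt₀pos ht₀
    have : 0 < p * C₁ := mul_pos hβ hC₁
    positivity
  have hlin : ∀ t : ℝ, t₀ ≤ t → G t ≤ K * t := by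
    intro t ht
    have h1 := hMVT t ht
    have h2 : G t₀ ≤ G t₀ / t₀ * t := by
      rw [div_mul_eq_mul_div, le_div_iff₀ ht₀]
      have := hGt₀pos
      nlinarith
    have h3 : p * C₁ * (t - t₀) ≤ p * C₁ * t := by
      have hpC : 0 < p * C₁ := mul_pos hβ hC₁
      nlinarith
    calc G t ≤ G t₀ + p * C₁ * (t - t₀) := h1
      _ ≤ G t₀ / t₀ * t + p * C₁ * t := by nlinarith
      _ = K * t := by rw [hK]; ring
  -- choose constants
  refine ⟨K ^ ((1:ℝ)/p), Real.rpow_pos_of_pos hKpos _,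
    C₁ * (K ^ ((1:ℝ)/p)) ^ β₃, by positivity, t₀, le_refl _, ?_⟩
  intro t ht
  have ht0 : 0 < t := lt_of_lt_of_le ht₀ ht
  have hFt : 0 < F t := hFpos t ht0
  have hFbound : F t ≤ K ^ ((1:ℝ)/p) * t ^ ((1:ℝ)/p) := by
    have h1 : G t ≤ K * t := hlin t ht
    have h2 : (G t) ^ ((1:ℝ)/p) ≤ (K * t) ^ ((1:ℝ)/p) := by
      apply Real.rpow_le_rpow (le_of_lt (Real.rpow_pos_of_pos hFt p)) h1
      positivity
    have h3 : (G t) ^ ((1:ℝ)/p) = F t := by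
      show (F t ^ p) ^ ((1:ℝ)/p) = F t
      rw [← Real.rpow_mul hFt.le, mul_one_div, div_self (ne_of_gt hβ), Real.rpow_one]
    have h4 : (K * t) ^ ((1:ℝ)/p) = K ^ ((1:ℝ)/p) * t ^ ((1:ℝ)/p) :=
      Real.mul_rpow hKpos.le ht0.le
    rw [h3, h4] at h2
    exact h2
  constructor
  · exact hFbound
  · have h1 : f t ≤ C₁ * F t ^ β₃ := hyp t ht
    have h2 : F t ^ β₃ ≤ (K ^ ((1:ℝ)/p) * t ^ ((1:ℝ)/p)) ^ β₃ :=
      Real.rpow_le_rpow hFt.le hFbound hβ₃0.le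
    have h3 : (K ^ ((1:ℝ)/p) * t ^ ((1:ℝ)/p)) ^ β₃
        = (K ^ ((1:ℝ)/p)) ^ β₃ * t ^ (β₃ / p) := by
      rw [Real.mul_rpow (by positivity) (by positivity),
        ← Real.rpow_mul ht0.le]
      congr 1
      rw [one_div, inv_mul_eq_div]
    calc f t ≤ C₁ * F t ^ β₃ := h1
      _ ≤ C₁ * ((K ^ ((1:ℝ)/p)) ^ β₃ * t ^ (β₃ / p)) := by
          rw [← h3]; exact mul_le_mul_of_nonneg_left h2 hC₁.le
      _ = C₁ * (K ^ ((1:ℝ)/p)) ^ β₃ * t ^ (β₃ / p) := by ring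
end

section
/- Let f : [0,∞) → ℝ be C¹, positive and nondecreasing, let 1/2 < β₁ < 1 and β₃ > 0, and suppose β₁ < f'(t)F(t)/f(t)² < β₃ for all t ≥ t₀ > 0, where in addition β₁ < β₂ < f'(t)F(t)/f(t)² for some β₂ and all t ≥ t₀. Define ξ(t) := β₁ f(t)/F(t). Then there exists a constant C > 0 (depending only on f, t₀, β₁, β₂, β₃) such that for all t ≥ t₀: f(t) ( f'(t)/f(t) − ξ(t) ) · exp( 2∫_{t₀}^t ( ξ(s) + √(ξ'(s)+ξ(s)²) ) ds ) ≥ C · F(t)^{2β₁−1} · f(t)^{2 + 2√((2β₁−1)/β₃)}. -/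
open Filter Set MeasureTheory intervalIntegral

set_option maxHeartbeats 1000000 in
/-- Let `f : [0,∞) → ℝ` be C¹, positive and nondecreasing,
`1/2 < β₁ < β₂`, `β₁ < 1`, `β₃ > 0`, `t₀ > 0`, with `β₂ < f'(t)F(t)/f(t)² < β₃` for all
`t ≥ t₀`, where `F(t) = ∫₀^t f(s) ds`. With `ξ(t) := β₁ f(t)/F(t)` there is a constant
`C > 0` such that for all `t ≥ t₀`:
`f(t)(f'(t)/f(t) − ξ(t)) exp(2∫_{t₀}^t (ξ(s) + √(ξ'(s)+ξ(s)²)) ds)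
  ≥ C F(t)^{2β₁−1} f(t)^{2 + 2√((2β₁−1)/β₃)}`. -/
theorem stmt_19 (f f' F : ℝ → ℝ) (β₁ β₂ β₃ t₀ : ℝ)
    (hf' : ∀ t ∈ Set.Ici (0:ℝ), HasDerivAt f (f' t) t)
    (hf'cont : ContinuousOn f' (Set.Ici 0))
    (hpos : ∀ t ≥ (0:ℝ), 0 < f t)
    (hmono : MonotoneOn f (Set.Ici 0))
    (hβ₁ : 1/2 < β₁) (hβ₁1 : β₁ < 1) (hβ₁₂ : β₁ < β₂) (hβ₃ : 0 < β₃)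
    (ht₀ : 0 < t₀)
    (hyp : ∀ t ≥ t₀, β₂ < f' t * F t / (f t) ^ 2 ∧ f' t * F t / (f t) ^ 2 < β₃)
    (hF : ∀ t, F t = ∫ s in (0:ℝ)..t, f s) :
    ∃ C > (0:ℝ), ∀ t ≥ t₀,
      C * F t ^ (2 * β₁ - 1) * f t ^ (2 + 2 * Real.sqrt ((2 * β₁ - 1) / β₃)) ≤
        f t * (f' t / f t - β₁ * f t / F t) *
          Real.exp (2 * ∫ s in t₀..t,
            β₁ * f s / F s +
              Real.sqrt (deriv (fun r => β₁ * f r / F r) s + (β₁ * f s / F s) ^ 2)) := by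
  set c := Real.sqrt ((2 * β₁ - 1) / β₃) with hc
  have hβ₁0 : 0 < β₁ := by linarith
  have h2β : 0 < 2 * β₁ - 1 := by linarith
  have hc0 : 0 ≤ c := Real.sqrt_nonneg _
  have hcsq : c ^ 2 = (2 * β₁ - 1) / β₃ := Real.sq_sqrt (by positivity)
  -- continuity of f
  have hfc : ∀ t ≥ (0:ℝ), ContinuousAt f t := fun t ht => (hf' t ht).continuousAt
  have hfco : ContinuousOn f (Set.Ici 0) := fun t ht => (hfc t ht).continuousWithinAt
  -- F has derivative f
  have hFd : ∀ t > (0:ℝ), HasDerivAt F (f t) t := by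
    intro t ht
    have hint : IntervalIntegrable f volume 0 t := by
      apply ContinuousOn.intervalIntegrable
      apply hfco.mono
      rw [Set.uIcc_of_le ht.le]
      exact fun x hx => hx.1
    have hmeas : StronglyMeasurableAtFilter f (nhds t) volume := by
      refine AEStronglyMeasurable.stronglyMeasurableAtFilter_of_mem ?_
        (Ioi_mem_nhds ht : Set.Ioi (0:ℝ) ∈ nhds t)
      exact ((hfco.mono (fun x hx => le_of_lt hx)).aestronglyMeasurable measurableSet_Ioi)
    have h2 := intervalIntegral.integral_hasDerivAt_right hint hmeas (hfc t ht.le)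
    exact h2.congr_of_eventuallyEq (Filter.Eventually.of_forall fun u => hF u)
  -- F positive
  have hFpos : ∀ t > (0:ℝ), 0 < F t := by
    intro t ht
    rw [hF t]
    apply intervalIntegral.intervalIntegral_pos_of_pos_on
    · apply ContinuousOn.intervalIntegrable
      apply hfco.mono
      rw [Set.uIcc_of_le ht.le]
      exact fun x hx => hx.1
    · exact fun x hx => hpos x hx.1.le
    · exact ht
  have hfpos : ∀ t ≥ t₀, 0 < f t := fun t ht => hpos t (le_trans ht₀.le ht)
  have hFtpos : ∀ t ≥ t₀, 0 < F t := fun t ht => hFpos t (lt_of_lt_of_le ht₀ ht)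
  -- f' positive on [t₀, ∞)
  have hf'pos : ∀ t ≥ t₀, 0 < f' t := by
    intro t ht
    have h1 := (hyp t ht).1
    have h2 : 0 < f' t * F t / f t ^ 2 := lt_trans (by linarith) h1
    have h3 : 0 < f t ^ 2 := pow_pos (hfpos t ht) 2
    have h4 : 0 < f' t * F t := by
      rcases div_pos_iff.mp h2 with ⟨h, _⟩ | ⟨_, h⟩
      · exact h
      · nlinarith
    nlinarith [hFtpos t ht]
  -- derivative of ξ
  have hξd : ∀ s ≥ t₀, HasDerivAt (fun r => β₁ * f r / F r)
      ((β₁ * f' s * F s - β₁ * f s * f s) / F s ^ 2) s := by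
    intro s hs
    have hs0 : 0 < s := lt_of_lt_of_le ht₀ hs
    have h1 : HasDerivAt (fun r => β₁ * f r) (β₁ * f' s) s :=
      (hf' s hs0.le).const_mul β₁
    exact h1.div (hFd s hs0) (ne_of_gt (hFpos s hs0))
  have hderiv_eq : ∀ s ≥ t₀, deriv (fun r => β₁ * f r / F r) s =
      (β₁ * f' s * F s - β₁ * f s * f s) / F s ^ 2 := fun s hs => (hξd s hs).deriv
  -- key pointwise inequality
  have hkey : ∀ s ≥ t₀, c * (f' s / f s) ≤
      Real.sqrt (deriv (fun r => β₁ * f r / F r) s + (β₁ * f s / F s) ^ 2) := by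
    intro s hs
    have hfs := hfpos s hs
    have hFs := hFtpos s hs
    have hf's := hf'pos s hs
    have hA1 := (hyp s hs).1
    have hA2 := (hyp s hs).2
    have hfs2 : (0:ℝ) < f s ^ 2 := pow_pos hfs 2
    have hA1' : β₂ * f s ^ 2 < f' s * F s := (lt_div_iff₀ hfs2).mp hA1
    have hA2' : f' s * F s < β₃ * f s ^ 2 := by
      have := (div_lt_iff₀ hfs2).mp hA2
      linarith
    have h5 : 0 ≤ (2 * β₁ - 1) * (f' s * F s) * (β₃ * f s ^ 2 - f' s * F s) :=
      mul_nonneg (mul_nonneg h2β.le (mul_pos hf's hFs).le) (by linarith)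
    have h6 : 0 ≤ ((1 - β₁) * (f' s * F s - β₁ * f s ^ 2)) * (β₃ * f s ^ 2) :=
      mul_nonneg (mul_nonneg (by linarith) (by nlinarith)) (by positivity)
    have hsq : (c * (f' s / f s)) ^ 2 ≤
        deriv (fun r => β₁ * f r / F r) s + (β₁ * f s / F s) ^ 2 := by
      rw [hderiv_eq s hs, mul_pow, hcsq]
      have hD : (β₁ * f' s * F s - β₁ * f s * f s) / F s ^ 2 + (β₁ * f s / F s) ^ 2
          = (β₁ * (f' s * F s) - β₁ * f s ^ 2 + β₁ ^ 2 * f s ^ 2) / F s ^ 2 := by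
        field_simp
      have hL : (2 * β₁ - 1) / β₃ * (f' s / f s) ^ 2
          = ((2 * β₁ - 1) * f' s ^ 2) / (β₃ * f s ^ 2) := by
        field_simp
      rw [hD, hL, div_le_div_iff₀ (by positivity) (by positivity)]
      nlinarith [h5, h6]
    calc c * (f' s / f s) = Real.sqrt ((c * (f' s / f s)) ^ 2) :=
          (Real.sqrt_sq (by positivity)).symm
      _ ≤ _ := Real.sqrt_le_sqrt hsq
  -- continuity of all relevant functions on Ici t₀
  have hsub : Set.Ici t₀ ⊆ Set.Ici (0:ℝ) := fun x hx => le_trans ht₀.le hx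
  have hfco' : ContinuousOn f (Set.Ici t₀) := hfco.mono hsub
  have hf'co' : ContinuousOn f' (Set.Ici t₀) := hf'cont.mono hsub
  have hFco : ContinuousOn F (Set.Ici t₀) := fun s hs =>
    ((hFd s (lt_of_lt_of_le ht₀ hs)).continuousAt).continuousWithinAt
  have hFne : ∀ s ∈ Set.Ici t₀, F s ≠ 0 := fun s hs => ne_of_gt (hFtpos s hs)
  have hfne : ∀ s ∈ Set.Ici t₀, f s ≠ 0 := fun s hs => ne_of_gt (hfpos s hs)
  have hξco : ContinuousOn (fun s => β₁ * f s / F s) (Set.Ici t₀) :=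
    ((continuousOn_const.mul hfco').div hFco hFne)
  have hdco : ContinuousOn (fun s => deriv (fun r => β₁ * f r / F r) s) (Set.Ici t₀) := by
    apply ContinuousOn.congr
      (f := fun s => (β₁ * f' s * F s - β₁ * f s * f s) / F s ^ 2)
    · apply ContinuousOn.div
      · exact ((continuousOn_const.mul hf'co').mul hFco).sub
          ((continuousOn_const.mul hfco').mul hfco')
      · exact hFco.pow 2
      · exact fun s hs => pow_ne_zero 2 (hFne s hs)
    · exact fun s hs => hderiv_eq s hs
  have hIntco : ContinuousOn (fun s => β₁ * f s / F s +
      Real.sqrt (deriv (fun r => β₁ * f r / F r) s + (β₁ * f s / F s) ^ 2))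
      (Set.Ici t₀) := by
    apply hξco.add
    exact (Real.continuous_sqrt.comp_continuousOn (hdco.add (hξco.pow 2)))
  have hgco : ContinuousOn (fun s => β₁ * (f s / F s) + c * (f' s / f s)) (Set.Ici t₀) :=
    (continuousOn_const.mul (hfco'.div hFco hFne)).add
      (continuousOn_const.mul (hf'co'.div hfco' hfne))
  -- the constant
  refine ⟨(β₂ - β₁) * F t₀ ^ (-(2 * β₁)) * f t₀ ^ (-(2 * c)), ?_, ?_⟩
  · exact mul_pos (mul_pos (sub_pos.2 hβ₁₂)
      (Real.rpow_pos_of_pos (hFtpos t₀ le_rfl) _))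
      (Real.rpow_pos_of_pos (hfpos t₀ le_rfl) _)
  intro t ht
  have ht0 : 0 < t := lt_of_lt_of_le ht₀ ht
  have hicc : Set.Icc t₀ t ⊆ Set.Ici t₀ := fun x hx => hx.1
  have huicc : Set.uIcc t₀ t = Set.Icc t₀ t := Set.uIcc_of_le ht
  -- FTC for the lower-bound integrand
  have hGd : ∀ s ∈ Set.uIcc t₀ t, HasDerivAt
      (fun r => β₁ * Real.log (F r) + c * Real.log (f r))
      (β₁ * (f s / F s) + c * (f' s / f s)) s := by
    intro s hs
    rw [huicc] at hs
    have hs0 : 0 < s := lt_of_lt_of_le ht₀ hs.1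
    have h1 : HasDerivAt (fun r => Real.log (F r)) (f s / F s) s :=
      (hFd s hs0).log (hFne s hs.1)
    have h2 : HasDerivAt (fun r => Real.log (f r)) (f' s / f s) s :=
      (hf' s hs0.le).log (hfne s hs.1)
    exact (h1.const_mul β₁).add (h2.const_mul c)
  have hgint : IntervalIntegrable (fun s => β₁ * (f s / F s) + c * (f' s / f s))
      volume t₀ t := by
    apply ContinuousOn.intervalIntegrable
    exact hgco.mono (by rw [huicc]; exact hicc)
  have hhint : IntervalIntegrable (fun s => β₁ * f s / F s +
      Real.sqrt (deriv (fun r => β₁ * f r / F r) s + (β₁ * f s / F s) ^ 2))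
      volume t₀ t := by
    apply ContinuousOn.intervalIntegrable
    exact hIntco.mono (by rw [huicc]; exact hicc)
  have hFTC : (∫ s in t₀..t, β₁ * (f s / F s) + c * (f' s / f s)) =
      (β₁ * Real.log (F t) + c * Real.log (f t)) -
      (β₁ * Real.log (F t₀) + c * Real.log (f t₀)) :=
    intervalIntegral.integral_eq_sub_of_hasDerivAt hGd hgint
  have hmono' : (∫ s in t₀..t, β₁ * (f s / F s) + c * (f' s / f s)) ≤
      ∫ s in t₀..t, β₁ * f s / F s +
        Real.sqrt (deriv (fun r => β₁ * f r / F r) s + (β₁ * f s / F s) ^ 2) := by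
    apply intervalIntegral.integral_mono_on ht hgint hhint
    intro s hs
    have h1 := hkey s hs.1
    have : β₁ * (f s / F s) = β₁ * f s / F s := by ring
    linarith
  have hIlow : (β₁ * Real.log (F t) + c * Real.log (f t)) -
      (β₁ * Real.log (F t₀) + c * Real.log (f t₀)) ≤
      ∫ s in t₀..t, β₁ * f s / F s +
        Real.sqrt (deriv (fun r => β₁ * f r / F r) s + (β₁ * f s / F s) ^ 2) := by
    rw [← hFTC]; exact hmono'
  -- abbreviations
  have hFt := hFtpos t ht
  have hft := hfpos t ht
  have hFt₀ := hFtpos t₀ le_rfl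
  have hft₀ := hfpos t₀ le_rfl
  -- lower bound on the exponential
  have hE : F t ^ (2 * β₁) * f t ^ (2 * c) * (F t₀ ^ (-(2 * β₁)) * f t₀ ^ (-(2 * c))) ≤
      Real.exp (2 * ∫ s in t₀..t, β₁ * f s / F s +
        Real.sqrt (deriv (fun r => β₁ * f r / F r) s + (β₁ * f s / F s) ^ 2)) := by
    have heq : F t ^ (2 * β₁) * f t ^ (2 * c) * (F t₀ ^ (-(2 * β₁)) * f t₀ ^ (-(2 * c))) =
        Real.exp (2 * ((β₁ * Real.log (F t) + c * Real.log (f t)) -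
          (β₁ * Real.log (F t₀) + c * Real.log (f t₀)))) := by
      rw [Real.rpow_def_of_pos hFt, Real.rpow_def_of_pos hft,
        Real.rpow_def_of_pos hFt₀, Real.rpow_def_of_pos hft₀,
        ← Real.exp_add, ← Real.exp_add, ← Real.exp_add]
      congr 1
      ring
    rw [heq]
    apply Real.exp_le_exp.mpr
    linarith
  -- lower bound on the prefactor
  have hP : (β₂ - β₁) * f t ^ 2 / F t ≤ f t * (f' t / f t - β₁ * f t / F t) := by
    have h1 : β₂ * f t ^ 2 < f' t * F t := (lt_div_iff₀ (pow_pos hft 2)).mp (hyp t ht).1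
    have h2 : f t * (f' t / f t - β₁ * f t / F t)
        = (f' t * F t - β₁ * f t ^ 2) / F t := by
      field_simp
    rw [h2, div_le_div_iff₀ hFt hFt]
    nlinarith [mul_nonneg (sub_nonneg.2 h1.le) hFt.le]
  have hPpos : (0:ℝ) ≤ (β₂ - β₁) * f t ^ 2 / F t :=
    div_nonneg (mul_nonneg (by linarith) (pow_pos hft 2).le) hFt.le
  have hE0 : (0:ℝ) ≤ F t ^ (2 * β₁) * f t ^ (2 * c) * (F t₀ ^ (-(2 * β₁)) * f t₀ ^ (-(2 * c))) :=
    le_of_lt (mul_pos (mul_pos (Real.rpow_pos_of_pos hFt _) (Real.rpow_pos_of_pos hft _))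
      (mul_pos (Real.rpow_pos_of_pos hFt₀ _) (Real.rpow_pos_of_pos hft₀ _)))
  calc (β₂ - β₁) * F t₀ ^ (-(2 * β₁)) * f t₀ ^ (-(2 * c)) * F t ^ (2 * β₁ - 1) *
        f t ^ (2 + 2 * c)
      = ((β₂ - β₁) * f t ^ 2 / F t) *
        (F t ^ (2 * β₁) * f t ^ (2 * c) * (F t₀ ^ (-(2 * β₁)) * f t₀ ^ (-(2 * c)))) := by
        rw [Real.rpow_sub hFt, Real.rpow_one, Real.rpow_add hft,
          show ((2:ℝ)) = ((2:ℕ):ℝ) by norm_num, Real.rpow_natCast]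
        field_simp
    _ ≤ f t * (f' t / f t - β₁ * f t / F t) *
          Real.exp (2 * ∫ s in t₀..t, β₁ * f s / F s +
            Real.sqrt (deriv (fun r => β₁ * f r / F r) s + (β₁ * f s / F s) ^ 2)) :=
        mul_le_mul hP hE hE0 (le_trans hPpos hP)
end
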